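/- Let C be a category, and let p : E → C and q : F → C be Grothendieck opfibrations (cocartesian fibrations of 1-categories). Let α : E → F be a functor over C preserving cocartesian morphisms. Then α is an equivalence of categories if and only if for every object c of C, the induced functor on fibers α_c : E_c → F_c is an equivalence of categories. -/

import Mathlib

open CategoryTheory

universe v₁ v₂ v₃ u₁ u₂ u₃

variable {E : Type u₁} [Category.{v₁} E] {C : Type u₂} [Category.{v₂} C]

/-- A morphism `f : a ⟶ b` of `E` is cocartesian with respect to `p : E ⥤ C` if every
`g : a ⟶ c` whose image factors through `p.map f` factors uniquely through `f` by a
morphism with the prescribed image. -/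
def IsCocartesianMor (p : E ⥤ C) {a b : E} (f : a ⟶ b) : Prop :=
  ∀ ⦃c : E⦄ (g : a ⟶ c) (w : p.obj b ⟶ p.obj c),
    p.map g = p.map f ≫ w → ∃! h : b ⟶ c, p.map h = w ∧ f ≫ h = g

/-- `p : E ⥤ C` is a Grothendieck opfibration: every arrow `u` of `C` with a lift of its
domain admits a cocartesian lift. -/
def IsOpfibration (p : E ⥤ C) : Prop :=
  ∀ (a : E) ⦃y : C⦄ (u : p.obj a ⟶ y),
    ∃ (b : E) (f : a ⟶ b) (hb : p.obj b = y),
      p.map f ≫ eqToHom hb = u ∧ IsCocartesianMor p f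

/-- A morphism `f : a ⟶ b` is locally cocartesian for `p : E ⥤ C` if every other lift of
`p.map f` with domain `a` factors through `f` by a unique vertical morphism. -/
def IsLocallyCocartesianMor (p : E ⥤ C) {a b : E} (f : a ⟶ b) : Prop :=
  ∀ ⦃c : E⦄ (hc : p.obj c = p.obj b) (g : a ⟶ c),
    p.map g = p.map f ≫ eqToHom hc.symm →
    ∃! h : b ⟶ c, p.map h = eqToHom hc.symm ∧ f ≫ h = g

/-- The fiber of `p : E ⥤ C` over `c : C`: objects of `E` lying strictly over `c` and
morphisms lying over the identity of `c`. -/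
def Fiber (p : E ⥤ C) (c : C) : Type u₁ := {a : E // p.obj a = c}

instance Fiber.category (p : E ⥤ C) (c : C) : Category (Fiber p c) where
  Hom a b := {f : a.1 ⟶ b.1 // p.map f = eqToHom (a.2.trans b.2.symm)}
  id a := ⟨𝟙 a.1, by rw [p.map_id, eqToHom_refl]⟩
  comp f g := ⟨f.1 ≫ g.1, by rw [p.map_comp, f.2, g.2, eqToHom_trans]⟩
  id_comp f := Subtype.ext (Category.id_comp f.1)
  comp_id f := Subtype.ext (Category.comp_id f.1)
  assoc f g h := Subtype.ext (Category.assoc f.1 g.1 h.1)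

/-- The functor induced on fibers by a functor `α : E ⥤ F` over `C`. -/
def fiberFunctor {F : Type u₃} [Category.{v₃} F] (p : E ⥤ C) (q : F ⥤ C) (α : E ⥤ F)
    (h : α ⋙ q = p) (c : C) : Fiber p c ⥤ Fiber q c where
  obj a := ⟨α.obj a.1, (Functor.congr_obj h a.1).trans a.2⟩
  map {a b} f := ⟨α.map f.1, by
    have hh := Functor.congr_hom h f.1
    simp only [Functor.comp_map] at hh
    rw [show q.map (α.map f.1) = (α ⋙ q).map f.1 from rfl] at hh ⊢
    rw [hh, f.2]
    simp [eqToHom_trans]⟩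
  map_id a := Subtype.ext (α.map_id a.1)
  map_comp f g := Subtype.ext (α.map_comp f.1 g.1)

/-- A cocartesian morphism over an isomorphism is an isomorphism. -/
lemma isIso_of_cocart {p : E ⥤ C} {a b : E} {f : a ⟶ b} (hf : IsCocartesianMor p f)
    (hiso : IsIso (p.map f)) : IsIso f := by
  obtain ⟨g, ⟨hg1, hg2⟩, -⟩ := hf (𝟙 a) (inv (p.map f)) (by simp)
  refine ⟨g, hg2, ?_⟩
  obtain ⟨k, hk, hub⟩ := hf f (𝟙 _) (by simp)
  have h1 : g ≫ f = k := hub _ ⟨by simp [hg1], by rw [← Category.assoc, hg2, Category.id_comp]⟩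
  have h2 : 𝟙 b = k := hub _ ⟨by simp, by simp⟩
  rw [h1, ← h2]

/-- Let `p : E ⥤ C` and `q : F ⥤ C` be Grothendieck opfibrations and
`α : E ⥤ F` a functor over `C` preserving cocartesian morphisms.  Then `α` is an
equivalence of categories iff for every object `c` of `C` the induced functor on fibers
`α_c : E_c ⥤ F_c` is an equivalence of categories. -/
theorem stmt_5 {F : Type u₃} [Category.{v₃} F] (p : E ⥤ C) (q : F ⥤ C)
    (hp : IsOpfibration p) (hq : IsOpfibration q)
    (α : E ⥤ F) (h : α ⋙ q = p)
    (hα : ∀ {a b : E} (f : a ⟶ b), IsCocartesianMor p f → IsCocartesianMor q (α.map f)) :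
    α.IsEquivalence ↔ ∀ c : C, (fiberFunctor p q α h c).IsEquivalence := by
  -- basic compatibility facts
  have hobj : ∀ x : E, q.obj (α.obj x) = p.obj x := fun x => Functor.congr_obj h x
  have hmap : ∀ {x y : E} (m : x ⟶ y),
      q.map (α.map m) = eqToHom (hobj x) ≫ p.map m ≫ eqToHom (hobj y).symm := by
    intro x y m
    have := Functor.congr_hom h m
    simpa using this
  have hmap' : ∀ {x y : E} (m : x ⟶ y),
      p.map m = eqToHom (hobj x).symm ≫ q.map (α.map m) ≫ eqToHom (hobj y) := by
    intro x y m; rw [hmap m]; simp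
  constructor
  · intro hE c
    have : α.Full := hE.full
    have : α.Faithful := hE.faithful
    have : α.EssSurj := hE.essSurj
    refine ⟨⟨?_⟩, ⟨?_⟩, ⟨?_⟩⟩
    · -- faithful on fibers
      intro a b f g hfg
      exact Subtype.ext (α.map_injective (congrArg Subtype.val hfg))
    · -- full on fibers
      intro a b g
      obtain ⟨f, hf⟩ := α.map_surjective g.1
      refine ⟨⟨f, ?_⟩, Subtype.ext hf⟩
      rw [hmap' f, hf]
      erw [g.2]
      erw [eqToHom_trans, eqToHom_trans]
    · -- essentially surjective on fibers
      intro b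
      obtain ⟨a, ⟨φ⟩⟩ := Functor.EssSurj.mem_essImage (F := α) b.1
      -- cocartesian lift of the image of φ.hom
      obtain ⟨a', f, ha', hlift, hcoc⟩ :=
        hp a (eqToHom (hobj a).symm ≫ q.map φ.hom ≫ eqToHom b.2)
      have hpf : p.map f = (eqToHom (hobj a).symm ≫ q.map φ.hom ≫ eqToHom b.2) ≫
          eqToHom ha'.symm := by rw [← hlift]; simp
      have hiso : IsIso (p.map f) := by rw [hpf]; infer_instance
      have haf : IsIso (α.map f) := isIso_of_cocart (hα f hcoc) (by rw [hmap f]; infer_instance)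
      -- factor φ.hom through α.map f
      obtain ⟨k, ⟨hk1, hk2⟩, -⟩ := hα f hcoc φ.hom
        (eqToHom ((hobj a').trans (ha'.trans b.2.symm)))
        (by rw [hmap f, hpf]; simp [eqToHom_trans])
      have hkiso : IsIso k := by
        have : IsIso φ.hom := inferInstance
        exact IsIso.of_isIso_fac_left hk2
      refine ⟨⟨a', ha'⟩, ⟨⟨⟨k, by exact hk1⟩, ⟨@inv _ _ _ _ k hkiso, ?_⟩, ?_, ?_⟩⟩⟩
      · show q.map (inv k) = _
        rw [Functor.map_inv]
        apply IsIso.inv_eq_of_hom_inv_id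
        rw [hk1]
        erw [eqToHom_trans, eqToHom_refl]
      · exact Subtype.ext (IsIso.hom_inv_id k)
      · exact Subtype.ext (IsIso.inv_hom_id k)
  · intro hfib
    refine ⟨⟨?_⟩, ⟨?_⟩, ⟨?_⟩⟩
    · -- faithful
      intro a a' m₁ m₂ hm
      have hpm : p.map m₁ = p.map m₂ := by rw [hmap' m₁, hmap' m₂, hm]
      obtain ⟨b, f, hb, hlift, hcoc⟩ := hp a (p.map m₁)
      have hpf : p.map m₁ = p.map f ≫ eqToHom hb := by rw [hlift]
      obtain ⟨v₁, ⟨hv₁p, hv₁c⟩, -⟩ := hcoc m₁ (eqToHom hb) hpf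
      obtain ⟨v₂, ⟨hv₂p, hv₂c⟩, -⟩ := hcoc m₂ (eqToHom hb) (hpm ▸ hpf)
      -- α.map v₁ = α.map v₂ by uniqueness for the cocartesian α.map f
      obtain ⟨w, hw, hwu⟩ := hα f hcoc (α.map m₁)
        (eqToHom (hobj b) ≫ eqToHom hb ≫ eqToHom (hobj a').symm)
        (by conv_lhs => rw [← hv₁c]
            rw [α.map_comp, q.map_comp, hmap v₁, hv₁p])
      have e₁ : α.map v₁ = w := hwu _ ⟨by rw [hmap v₁, hv₁p], by rw [← α.map_comp, hv₁c]⟩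
      have e₂ : α.map v₂ = w := hwu _
        ⟨by rw [hmap v₂, hv₂p], by rw [← α.map_comp, hv₂c, ← hm]⟩
      -- use faithfulness of the fiber functor over p.obj a'
      have := (hfib (p.obj a')).faithful
      let X : Fiber p (p.obj a') := ⟨b, hb⟩
      let Y : Fiber p (p.obj a') := ⟨a', rfl⟩
      let V₁ : X ⟶ Y := ⟨v₁, by rw [hv₁p]⟩
      let V₂ : X ⟶ Y := ⟨v₂, by rw [hv₂p]⟩
      have hVV : (fiberFunctor p q α h (p.obj a')).map V₁ =
          (fiberFunctor p q α h (p.obj a')).map V₂ :=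
        Subtype.ext (by exact e₁.trans e₂.symm)
      have hv : v₁ = v₂ :=
        congrArg Subtype.val ((fiberFunctor p q α h (p.obj a')).map_injective hVV)
      rw [← hv₁c, ← hv₂c, hv]
    · -- full
      intro a a' g
      obtain ⟨b, f, hb, hlift, hcoc⟩ :=
        hp a (eqToHom (hobj a).symm ≫ q.map g ≫ eqToHom (hobj a'))
      obtain ⟨k, ⟨hk1, hk2⟩, -⟩ := hα f hcoc g
        (eqToHom ((hobj b).trans (hb.trans (hobj a').symm)))
        (by
          rw [hmap f]
          have : p.map f = (eqToHom (hobj a).symm ≫ q.map g ≫ eqToHom (hobj a')) ≫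
              eqToHom hb.symm := by rw [← hlift]; simp
          rw [this]; simp)
      have := (hfib (p.obj a')).full
      let K : (fiberFunctor p q α h (p.obj a')).obj ⟨b, hb⟩ ⟶
          (fiberFunctor p q α h (p.obj a')).obj ⟨a', rfl⟩ :=
        ⟨k, by exact hk1⟩
      obtain ⟨m, hmk⟩ := (fiberFunctor p q α h (p.obj a')).map_surjective K
      have hm2 : α.map m.1 = k := by exact congrArg Subtype.val hmk
      refine ⟨f ≫ m.1, ?_⟩
      rw [α.map_comp, hm2, hk2]
    · -- essentially surjective
      intro b
      have := (hfib (q.obj b)).essSurj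
      obtain ⟨a, ⟨ψ⟩⟩ := Functor.EssSurj.mem_essImage
        (F := fiberFunctor p q α h (q.obj b)) (⟨b, rfl⟩ : Fiber q (q.obj b))
      exact ⟨a.1, ⟨⟨ψ.hom.1, ψ.inv.1, congrArg Subtype.val ψ.hom_inv_id,
        congrArg Subtype.val ψ.inv_hom_id⟩⟩⟩
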